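/- Fix m ≥ 2 and let (c_n)_{n∈ℕ} be a sequence of natural numbers with c_n/n → 0. For each n, let A_n be the set of vectors x = (x_1,…,x_m) ∈ ℕ^m with x_1 + ⋯ + x_m = n such that there exists an index w with x_w − x_i ≥ c_n + 1 for every i ≠ w. Then lim_{n→∞} |A_n| / C(n+m−1, m−1) = 1. -/

import Mathlib

open Finset

lemma card_adt (k n : ℕ) :
    (Finset.Nat.antidiagonalTuple k n).card = (k + n - 1).choose n := by
  have hcoe : ((Finset.Nat.antidiagonalTuple k n : Finset (Fin k → ℕ)) : Set (Fin k → ℕ))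
      = {x : Fin k → ℕ | ∑ i, x i = n} := by
    ext x; simp [Finset.Nat.mem_antidiagonalTuple]
  have h1 : (Finset.Nat.antidiagonalTuple k n).card
      = Nat.card {x : Fin k → ℕ // ∑ i, x i = n} := by
    rw [← Set.ncard_coe_finset, hcoe]
    exact (Nat.card_coe_set_eq _).symm
  rw [h1, Nat.card_congr (Sym.equivNatSumOfFintype (Fin k) n).symm,
    Nat.card_eq_fintype_card, Sym.card_sym_eq_choose, Fintype.card_fin]

lemma filter_pair_card_le (k n d : ℕ) (i j : Fin (k + 1)) (hij : i ≠ j) :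
    ((Finset.Nat.antidiagonalTuple (k + 1) n).filter
        (fun x => x j = x i + d)).card ≤ (Finset.Nat.antidiagonalTuple k n).card := by
  apply Finset.card_le_card_of_injOn
    (fun x => (Function.update x i (x i + x j)) ∘ j.succAbove)
  · intro x hx
    simp only [Finset.mem_coe, Finset.mem_filter, Finset.Nat.mem_antidiagonalTuple] at hx
    obtain ⟨hsum, hd⟩ := hx
    rw [Finset.mem_coe, Finset.Nat.mem_antidiagonalTuple]
    set w := Function.update x i (x i + x j) with hw
    have hsw : ∑ s, w s = w j + ∑ t, w (j.succAbove t) := Fin.sum_univ_succAbove w j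
    have hsw2 : ∑ s, w s = ∑ s, x s + x j := by
      rw [hw, Finset.sum_update_of_mem (Finset.mem_univ i)]
      have : ∑ s : Fin (k+1), x s = x i + ∑ s ∈ Finset.univ \ {i}, x s := by
        rw [Finset.sum_eq_add_sum_sdiff_singleton_of_mem (Finset.mem_univ i)]
      omega
    have hwj : w j = x j := Function.update_of_ne (Ne.symm hij) _ _
    have : ∑ t, w (j.succAbove t) = n := by omega
    exact this
  · intro x hx y hy hxy
    simp only [Finset.mem_filter, Finset.Nat.mem_antidiagonalTuple, Finset.mem_coe] at hx hy
    have hagree : ∀ s : Fin (k+1), s ≠ j →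
        Function.update x i (x i + x j) s = Function.update y i (y i + y j) s := by
      intro s hs
      obtain ⟨t, rfl⟩ := Fin.exists_succAbove_eq hs
      exact congrFun hxy t
    have hi : x i + x j = y i + y j := by
      simpa [Function.update_self] using hagree i hij
    have hxi : x i = y i := by omega
    funext s
    rcases eq_or_ne s j with rfl | hsj
    · omega
    · have := hagree s hsj
      rcases eq_or_ne s i with rfl | hsi
      · exact hxi
      · simpa [Function.update_of_ne hsi] using this

/-- Plurality is asymptotically `o(n)`-collusion-proof on the number of voters
under the ISC assumption: if `c n / n → 0`, the fraction of scoring profiles with `n` voters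
and `m ≥ 2` candidates in which some candidate leads every other candidate by at least
`c n + 1` tends to `1` as `n → ∞`. -/
theorem plurality_asymptotically_collusion_proof_on_voters (m : ℕ) (hm : 2 ≤ m)
    (c : ℕ → ℕ)
    (hc : Filter.Tendsto (fun n : ℕ => (c n : ℝ) / (n : ℝ)) Filter.atTop (nhds 0)) :
    Filter.Tendsto
      (fun n : ℕ =>
        (({x : Fin m → ℕ | (∑ i, x i) = n ∧
            ∃ w : Fin m, ∀ i : Fin m, i ≠ w → x i + c n + 1 ≤ x w}).ncard : ℝ) /
          (Nat.choose (n + m - 1) (m - 1) : ℝ))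
      Filter.atTop (nhds 1) := by
  classical
  obtain ⟨k, rfl⟩ : ∃ k, m = k + 2 := ⟨m - 2, by omega⟩
  -- notation
  set P : ℕ → (Fin (k + 2) → ℕ) → Prop :=
    fun n x => ∃ w : Fin (k + 2), ∀ i : Fin (k + 2), i ≠ w → x i + c n + 1 ≤ x w with hP
  set A : ℕ → Finset (Fin (k + 2) → ℕ) := fun n => Finset.Nat.antidiagonalTuple (k + 2) n
    with hAdef
  set good : ℕ → Finset (Fin (k + 2) → ℕ) := fun n => (A n).filter (P n) with hgood
  set bad : ℕ → Finset (Fin (k + 2) → ℕ) := fun n => (A n).filter (fun x => ¬ P n x) with hbad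
  have hTcard : ∀ n, (A n).card = (n + k + 1).choose (k + 1) := by
    intro n
    rw [hAdef, card_adt]
    have h1 : k + 2 + n - 1 = n + k + 1 := by omega
    have h2 := Nat.choose_symm (show n ≤ n + k + 1 by omega)
    rw [h1, ← h2]
    congr 1
    omega
  have hBcard : ∀ n, (Finset.Nat.antidiagonalTuple (k + 1) n).card = (n + k).choose k := by
    intro n
    rw [card_adt]
    have h1 : k + 1 + n - 1 = n + k := by omega
    have h2 := Nat.choose_symm (show n ≤ n + k by omega)
    rw [h1, ← h2]
    congr 1
    omega
  -- counting bound on the bad set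
  have hbadcard : ∀ n, (bad n).card ≤ (k+2)*(k+2)*(c n + 1) * (n + k).choose k := by
    intro n
    set I : Finset ((Fin (k+2) × Fin (k+2)) × ℕ) :=
      ((univ ×ˢ univ).filter fun p : Fin (k+2) × Fin (k+2) => p.1 ≠ p.2) ×ˢ range (c n + 1)
      with hI
    have hsub : bad n ⊆ I.biUnion (fun p => (A n).filter (fun x => x p.1.2 = x p.1.1 + p.2)) := by
      intro x hx
      rw [hbad, Finset.mem_filter] at hx
      obtain ⟨hxA, hxP⟩ := hx
      obtain ⟨w, hw⟩ := Finite.exists_max x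
      simp only [hP] at hxP
      push_neg at hxP
      obtain ⟨i, hiw, hlt⟩ := hxP w
      refine Finset.mem_biUnion.2 ⟨((i, w), x w - x i), ?_, ?_⟩
      · rw [hI]
        refine Finset.mem_product.2 ⟨Finset.mem_filter.2 ⟨Finset.mem_univ _, hiw⟩, ?_⟩
        rw [Finset.mem_range]
        have := hw i
        omega
      · refine Finset.mem_filter.2 ⟨hxA, ?_⟩
        have := hw i
        simp only
        omega
    calc (bad n).card ≤ ∑ p ∈ I, ((A n).filter (fun x => x p.1.2 = x p.1.1 + p.2)).card :=
          le_trans (Finset.card_le_card hsub) (Finset.card_biUnion_le)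
      _ ≤ ∑ _p ∈ I, (n + k).choose k := by
          apply Finset.sum_le_sum
          intro p hp
          rw [hI, Finset.mem_product, Finset.mem_filter] at hp
          have hne : p.1.1 ≠ p.1.2 := hp.1.2
          have := filter_pair_card_le (k+1) n p.2 p.1.1 p.1.2 hne
          rw [hBcard n] at this
          exact this
      _ = I.card * (n + k).choose k := by rw [Finset.sum_const, smul_eq_mul]
      _ ≤ (k+2)*(k+2)*(c n + 1) * (n + k).choose k := by
          apply Nat.mul_le_mul_right
          rw [hI, Finset.card_product, Finset.card_range]
          have : ((univ ×ˢ univ).filter fun p : Fin (k+2) × Fin (k+2) => p.1 ≠ p.2).card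
              ≤ (k+2)*(k+2) := by
            calc _ ≤ ((univ : Finset (Fin (k+2))) ×ˢ (univ : Finset (Fin (k+2)))).card :=
                  Finset.card_filter_le _ _
              _ = (k+2)*(k+2) := by simp [Finset.card_product]
          exact Nat.mul_le_mul_right _ this
  -- partition
  have hsplit : ∀ n, (good n).card + (bad n).card = (n + k + 1).choose (k + 1) := by
    intro n
    rw [hgood, hbad, Finset.card_filter_add_card_filter_not, hTcard]
  have hTpos : ∀ n, (0:ℝ) < ((n + k + 1).choose (k + 1) : ℝ) := by
    intro n
    exact_mod_cast Nat.choose_pos (by omega)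
  -- the ratio of bad profiles tends to zero
  set r : ℕ → ℝ := fun n => ((bad n).card : ℝ) / ((n + k + 1).choose (k + 1) : ℝ) with hr
  have hNat : ∀ n, (bad n).card * (n + k + 1)
      ≤ ((k+2)*(k+2)*(k+1)) * (c n + 1) * ((n + k + 1).choose (k + 1)) := by
    intro n
    calc (bad n).card * (n + k + 1)
        ≤ ((k+2)*(k+2)*(c n + 1) * (n + k).choose k) * (n + k + 1) :=
          Nat.mul_le_mul_right _ (hbadcard n)
      _ = (k+2)*(k+2)*(c n + 1) * ((n + k + 1) * (n + k).choose k) := by ring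
      _ = (k+2)*(k+2)*(c n + 1) * ((n + k + 1).choose (k + 1) * (k + 1)) := by
          rw [Nat.add_one_mul_choose_eq]
      _ = ((k+2)*(k+2)*(k+1)) * (c n + 1) * ((n + k + 1).choose (k + 1)) := by ring
  have hr0 : Filter.Tendsto r Filter.atTop (nhds 0) := by
    set K : ℝ := ((k+2)*(k+2)*(k+1) : ℝ) with hK
    apply squeeze_zero' (g := fun n => K * ((c n : ℝ)/n + 1/n))
    · exact Filter.Eventually.of_forall fun n => by positivity
    · filter_upwards [Filter.eventually_ge_atTop 1] with n hn
      have hn0 : (0:ℝ) < (n:ℝ) := by exact_mod_cast hn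
      have key : r n ≤ (K * ((c n : ℝ) + 1)) / (n : ℝ) := by
        rw [hr, div_le_div_iff₀ (hTpos n) hn0]
        have h1 : ((bad n).card : ℝ) * (n : ℝ) ≤ ((bad n).card : ℝ) * ((n + k + 1 : ℕ) : ℝ) := by
          apply mul_le_mul_of_nonneg_left _ (by positivity)
          exact_mod_cast Nat.le_add_right n (k + 1) |>.trans (by omega)
        have h2 : ((bad n).card : ℝ) * ((n + k + 1 : ℕ) : ℝ)
            ≤ (K * ((c n : ℝ) + 1)) * ((n + k + 1).choose (k + 1) : ℝ) := by
          have := hNat n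
          have hcast : (((bad n).card * (n + k + 1) : ℕ) : ℝ)
              ≤ ((((k+2)*(k+2)*(k+1)) * (c n + 1) * ((n + k + 1).choose (k + 1)) : ℕ) : ℝ) := by
            exact_mod_cast this
          push_cast at hcast
          rw [hK]
          push_cast
          linarith
        linarith
      have heq : (K * ((c n : ℝ) + 1)) / (n : ℝ) = K * ((c n : ℝ)/n + 1/n) := by
        rw [← add_div, mul_div_assoc]
      linarith [key, heq.le, heq.ge]
    · have h1 : Filter.Tendsto (fun n : ℕ => (c n : ℝ)/n + 1/n) Filter.atTop (nhds 0) := by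
        have := hc.add tendsto_one_div_atTop_nhds_zero_nat
        simpa using this
      have := h1.const_mul K
      simpa using this
  -- conclude
  have hmain : ∀ n : ℕ,
      (({x : Fin (k+2) → ℕ | (∑ i, x i) = n ∧
          ∃ w : Fin (k+2), ∀ i : Fin (k+2), i ≠ w → x i + c n + 1 ≤ x w}).ncard : ℝ) /
        (Nat.choose (n + (k+2) - 1) ((k+2) - 1) : ℝ) = 1 - r n := by
    intro n
    have hsetcoe : {x : Fin (k+2) → ℕ | (∑ i, x i) = n ∧ P n x} = ↑(good n) := by
      ext x
      simp [hgood, hAdef, Finset.Nat.mem_antidiagonalTuple]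
    have hidx : n + (k+2) - 1 = n + k + 1 := by omega
    have hidx2 : (k+2) - 1 = k + 1 := by omega
    rw [hidx, hidx2]
    have hncard : ({x : Fin (k+2) → ℕ | (∑ i, x i) = n ∧ P n x}).ncard = (good n).card := by
      rw [hsetcoe, Set.ncard_coe_finset]
    rw [show {x : Fin (k+2) → ℕ | (∑ i, x i) = n ∧
          ∃ w : Fin (k+2), ∀ i : Fin (k+2), i ≠ w → x i + c n + 1 ≤ x w}
        = {x : Fin (k+2) → ℕ | (∑ i, x i) = n ∧ P n x} from rfl, hncard]
    have hg : ((good n).card : ℝ) = ((n + k + 1).choose (k + 1) : ℝ) - ((bad n).card : ℝ) := by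
      have := hsplit n
      have : ((good n).card : ℝ) + ((bad n).card : ℝ) = ((n + k + 1).choose (k + 1) : ℝ) := by
        exact_mod_cast congrArg (Nat.cast (R := ℝ)) this
      linarith
    rw [hr, hg, sub_div, div_self (hTpos n).ne']
  have : Filter.Tendsto (fun n => 1 - r n) Filter.atTop (nhds 1) := by
    have := (tendsto_const_nhds (x := (1:ℝ)) (f := Filter.atTop (α := ℕ))).sub hr0
    simpa using this
  exact this.congr fun n => (hmain n).symm
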